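/- Let R : (Fin 7)⁴ → ℝ satisfy the symmetries of a Riemann curvature tensor: R_{abcd} = −R_{bacd} = −R_{abdc} = R_{cdab}, and the first Bianchi identity R_{abcd} + R_{acdb} + R_{adbc} = 0. Then for all indices b, c: Σ_{a,e,f} R_{abef} ψ₀_{efca} = 0; that is, the metric contraction g^{ad} R_{abef} ψ₀^{ef}{}_{cd} vanishes identically. -/
import Mathlib


open scoped BigOperators

noncomputable section

/-- Kronecker delta `δ` on `Fin 7`. -/
def kd (a b : Fin 7) : ℝ := if a = b then 1 else 0

/-- The elementary alternating 3-tensor supported on permutations of `(i, j, k)`. -/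
def trip (i j k a b c : Fin 7) : ℝ :=
  (if a = i ∧ b = j ∧ c = k then (1 : ℝ) else 0)
    + (if a = j ∧ b = k ∧ c = i then (1 : ℝ) else 0)
    + (if a = k ∧ b = i ∧ c = j then (1 : ℝ) else 0)
    - (if a = i ∧ b = k ∧ c = j then (1 : ℝ) else 0)
    - (if a = k ∧ b = j ∧ c = i then (1 : ℝ) else 0)
    - (if a = j ∧ b = i ∧ c = k then (1 : ℝ) else 0)

/-- The standard `G₂` 3-form `φ₀` on `ℝ⁷`.  Indices `0, …, 6` correspond to the
paper's `1, …, 7`, so this is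
`e^{123} + e^{145} + e^{167} + e^{246} - e^{257} - e^{347} - e^{356}`. -/
def phi0 (a b c : Fin 7) : ℝ :=
  trip 0 1 2 a b c + trip 0 3 4 a b c + trip 0 5 6 a b c + trip 1 3 5 a b c
    - trip 1 4 6 a b c - trip 2 3 6 a b c - trip 2 4 5 a b c

/-- The totally antisymmetric Levi-Civita symbol `ε̂` on seven indices,
with `ε̂_{1234567} = 1`. -/
def eps7 (a b c d e f g : Fin 7) : ℝ :=
  if h : Function.Bijective ![a, b, c, d, e, f, g] then
    ((Equiv.Perm.sign (Equiv.ofBijective _ h) : ℤ) : ℝ)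
  else 0

/-- The 4-form `ψ₀ = ⋆φ₀`, the Euclidean Hodge dual of `φ₀`:
`ψ₀ = e^{4567} + e^{2367} + e^{2345} + e^{1357} - e^{1346} - e^{1256} - e^{1247}`. -/
def psi0 (m n p q : Fin 7) : ℝ :=
  (1 / 6 : ℝ) * ∑ r, ∑ s, ∑ t, eps7 m n p q r s t * phi0 r s t

def eps7' (v : Fin 7 → Fin 7) : ℝ :=
  if h : Function.Bijective v then
    ((Equiv.Perm.sign (Equiv.ofBijective v h) : ℤ) : ℝ)
  else 0

lemma eps7_eq (a b c d e f g : Fin 7) : eps7 a b c d e f g = eps7' ![a,b,c,d,e,f,g] := rfl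

lemma eps7'_comp (v : Fin 7 → Fin 7) (σ : Equiv.Perm (Fin 7)) :
    eps7' (v ∘ σ) = ((Equiv.Perm.sign σ : ℤ) : ℝ) * eps7' v := by
  unfold eps7'
  by_cases h : Function.Bijective v
  · have h2 : Function.Bijective (v ∘ σ) := h.comp σ.bijective
    rw [dif_pos h, dif_pos h2]
    have he : Equiv.ofBijective (v ∘ ⇑σ) h2 = σ.trans (Equiv.ofBijective v h) := by
      ext x; rfl
    have hs : Equiv.Perm.sign (σ.trans (Equiv.ofBijective v h))
        = Equiv.Perm.sign (Equiv.ofBijective v h) * Equiv.Perm.sign σ := by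
      rw [← Equiv.Perm.mul_def, map_mul]
    rw [he, hs]
    push_cast
    ring
  · have h2 : ¬ Function.Bijective (v ∘ σ) := by
      intro hb
      have : v = (v ∘ σ) ∘ σ.symm := by funext x; simp
      exact h (this ▸ hb.comp σ.symm.bijective)
    rw [dif_neg h, dif_neg h2, mul_zero]

def sigmaC : Equiv.Perm (Fin 7) :=
  ⟨![1,3,2,0,4,5,6], ![3,0,2,1,4,5,6], by decide, by decide⟩

lemma sigmaC_sign : ((Equiv.Perm.sign sigmaC : ℤ) : ℝ) = 1 := by
  have : (Equiv.Perm.sign sigmaC : ℤ) = 1 := by decide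
  rw [this]; norm_num

lemma eps7_cyc (e f c a r s t : Fin 7) : eps7 f a c e r s t = eps7 e f c a r s t := by
  have hσ : (![e,f,c,a,r,s,t] ∘ sigmaC) = ![f,a,c,e,r,s,t] := by
    funext x; fin_cases x <;> rfl
  rw [eps7_eq, eps7_eq, ← hσ, eps7'_comp, sigmaC_sign, one_mul]

lemma psi0_cyc (e f c a : Fin 7) : psi0 f a c e = psi0 e f c a := by
  unfold psi0
  congr 1
  refine Finset.sum_congr rfl fun r _ => Finset.sum_congr rfl fun s _ =>
    Finset.sum_congr rfl fun t _ => ?_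
  rw [eps7_cyc]

lemma sum_cyc (G : Fin 7 → Fin 7 → Fin 7 → ℝ) :
    (∑ a, ∑ e, ∑ f, G a e f) = ∑ a, ∑ e, ∑ f, G f a e := by
  rw [Finset.sum_comm]
  exact Finset.sum_congr rfl fun e _ => Finset.sum_comm

/-- If `R` has the symmetries of a Riemann curvature tensor
(antisymmetry in the first and last pairs, pair symmetry and the first Bianchi
identity), then the contraction `g^{ad} R_{abef} ψ₀^{ef}{}_{cd}` vanishes:
`Σ_{a,e,f} R_{abef} ψ₀_{efca} = 0` for all `b`, `c`. -/
theorem curvature_psi_contraction_vanishes (R : Fin 7 → Fin 7 → Fin 7 → Fin 7 → ℝ)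
    (hanti₁ : ∀ a b c d, R a b c d = -R b a c d)
    (hanti₂ : ∀ a b c d, R a b c d = -R a b d c)
    (hpair : ∀ a b c d, R a b c d = R c d a b)
    (hbianchi : ∀ a b c d, R a b c d + R a c d b + R a d b c = 0) :
    ∀ b c, ∑ a, ∑ e, ∑ f, R a b e f * psi0 e f c a = 0 := by
  intro b c
  have h1 : (∑ a, ∑ e, ∑ f, R a b e f * psi0 e f c a)
      = ∑ a, ∑ e, ∑ f, R f b a e * psi0 e f c a := by
    rw [sum_cyc (fun a e f => R a b e f * psi0 e f c a)]
    exact Finset.sum_congr rfl fun a _ => Finset.sum_congr rfl fun e _ =>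
      Finset.sum_congr rfl fun f _ => by rw [psi0_cyc f a c e, psi0_cyc e f c a]
  have h2 : (∑ a, ∑ e, ∑ f, R f b a e * psi0 e f c a)
      = ∑ a, ∑ e, ∑ f, R e b f a * psi0 e f c a := by
    rw [sum_cyc (fun a e f => R f b a e * psi0 e f c a)]
    exact Finset.sum_congr rfl fun a _ => Finset.sum_congr rfl fun e _ =>
      Finset.sum_congr rfl fun f _ => by rw [psi0_cyc f a c e, psi0_cyc e f c a]
  have hz : ∀ a e f : Fin 7, R a b e f + R e b f a + R f b a e = 0 := by
    intro a e f
    have hb := hbianchi b a e f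
    rw [hanti₁ a b e f, hanti₁ e b f a, hanti₁ f b a e]
    linarith
  have h3 : (∑ a, ∑ e, ∑ f, R a b e f * psi0 e f c a)
      + (∑ a, ∑ e, ∑ f, R e b f a * psi0 e f c a)
      + (∑ a, ∑ e, ∑ f, R f b a e * psi0 e f c a) = 0 := by
    simp only [← Finset.sum_add_distrib, ← add_mul]
    refine Finset.sum_eq_zero fun a _ => Finset.sum_eq_zero fun e _ =>
      Finset.sum_eq_zero fun f _ => ?_
    rw [hz a e f, zero_mul]
  linarith [h1, h2, h3]
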